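/- Suppose 0 < r₁ < r₂, the pit has radius 1, and a head of radius r₁ is surrounded by three beads of radii r₂, r₁, r₁ (necklace code 0,1:211) with the three dihedral angles summing to 2π. Then −r₁r₂² + r₁r₂ − r₁ + 3r₂² + 3r₂ = 0. -/

import Mathlib

open Real

theorem stmt_9 (r₁ r₂ : ℝ) (h₁ : 0 < r₁) (h₁₂ : r₁ < r₂)
    (M21 M11 T21 T11 T12 : ℝ)
    (hM21 : M21 ∈ Set.Ioo 0 π) (hM11 : M11 ∈ Set.Ioo 0 π)
    (hcM21 : Real.cos M21 =
      ((1 + r₂)^2 + (1 + r₁)^2 - (r₂ + r₁)^2) / (2 * (1 + r₂) * (1 + r₁)))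
    (hcM11 : Real.cos M11 =
      ((1 + r₁)^2 + (1 + r₁)^2 - (r₁ + r₁)^2) / (2 * (1 + r₁) * (1 + r₁)))
    (hT21 : T21 ∈ Set.Ioo 0 π) (hT11 : T11 ∈ Set.Ioo 0 π) (hT12 : T12 ∈ Set.Ioo 0 π)
    (hcT21 : Real.cos T21 =
      (Real.cos M21 - Real.cos M21 * Real.cos M11) / (Real.sin M21 * Real.sin M11))
    (hcT11 : Real.cos T11 =
      (Real.cos M11 - Real.cos M11 * Real.cos M11) / (Real.sin M11 * Real.sin M11))
    (hcT12 : Real.cos T12 =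
      (Real.cos M21 - Real.cos M11 * Real.cos M21) / (Real.sin M11 * Real.sin M21))
    (hsum : T21 + T11 + T12 = 2 * π) :
    -r₁ * r₂^2 + r₁ * r₂ - r₁ + 3 * r₂^2 + 3 * r₂ = 0 := by
  obtain ⟨hM21l, hM21r⟩ := hM21
  obtain ⟨hM11l, hM11r⟩ := hM11
  have hsa : 0 < Real.sin M21 := Real.sin_pos_of_pos_of_lt_pi hM21l hM21r
  have hsb : 0 < Real.sin M11 := Real.sin_pos_of_pos_of_lt_pi hM11l hM11r
  set a := Real.cos M21 with ha
  set b := Real.cos M11 with hb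
  set sa := Real.sin M21 with hsa'
  set sb := Real.sin M11 with hsb'
  have hsa2 : sa^2 = 1 - a^2 := by
    have := Real.sin_sq_add_cos_sq M21; linarith
  have hsb2 : sb^2 = 1 - b^2 := by
    have := Real.sin_sq_add_cos_sq M11; linarith
  have hb1 : b < 1 := by nlinarith [sq_nonneg (1+b)]
  have hTeq : T21 = T12 := by
    apply Real.injOn_cos ⟨le_of_lt hT21.1, le_of_lt hT21.2⟩ ⟨le_of_lt hT12.1, le_of_lt hT12.2⟩
    rw [hcT21, hcT12]; ring_nf
  have key : Real.cos T11 = 2 * Real.cos T21 ^ 2 - 1 := by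
    have hT11e : T11 = 2 * π - 2 * T21 := by rw [hTeq] at hsum; linarith
    rw [hT11e, Real.cos_sub, Real.cos_two_pi, Real.sin_two_pi]
    simp [Real.cos_two_mul]
  have h1 : Real.cos T11 * (sb * sb) = b * (1 - b) := by
    rw [hcT11]; field_simp
  have h2 : Real.cos T21 * (sa * sb) = a * (1 - b) := by
    rw [hcT21]; field_simp
  have e1 : b*(1-b)*sa^2 = 2*(a*(1-b))^2 - sa^2*sb^2 := by
    linear_combination (-sa^2)*h1 + (sa^2*sb^2)*key + 2*(Real.cos T21*(sa*sb) + a*(1-b))*h2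
  have e2 : (1 - b) * (2*b + 1 - 3*a^2) = 0 := by
    linear_combination e1 - (b*(1-b)+sb^2)*hsa2 - (1-a^2)*hsb2
  have h3 : 3 * a^2 = 2*b + 1 := by
    rcases mul_eq_zero.mp e2 with h | h
    · linarith
    · linarith
  have hr1 : (0:ℝ) < 1 + r₁ := by linarith
  have hr2 : (0:ℝ) < 1 + r₂ := by linarith
  rw [hcM21, hcM11] at h3
  field_simp at h3
  have h4' : (1+r₁)^2 * (r₁ * (-r₁ * r₂^2 + r₁ * r₂ - r₁ + 3 * r₂^2 + 3 * r₂)) = 0 := by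
    linear_combination (-(1:ℝ)/16)*(1+r₁)^2*h3
  have h4 : r₁ * (-r₁ * r₂^2 + r₁ * r₂ - r₁ + 3 * r₂^2 + 3 * r₂) = 0 :=
    (mul_eq_zero.mp h4').resolve_left (by positivity)
  rcases mul_eq_zero.mp h4 with h | h
  · exact absurd h (ne_of_gt h₁)
  · exact h
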